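/- arXiv:2111.11895 — 2 statements merged into one kernel-verified Lean document; each statement's English description precedes it below -/
import Mathlib

section
/- Let f be an A-diffeomorphism of a closed surface M² whose non-wandering set is a finite disjoint union of closed nowhere dense invariant sets Λ₁,…,Λ_k each of which is a one-dimensional attractor (i.e., Λᵢ = W^u(Λᵢ) and Λᵢ is nowhere dense), and suppose M² = ⋃ᵢ W^u(Λᵢ). Then we reach a contradiction: such f cannot exist. -/
/-- Suppose `f` is an A-diffeomorphism of a closed surface `M²` whose non-wandering
set is a finite disjoint union of closed nowhere dense invariant sets `Λ₁, …, Λ_k`,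
each a one-dimensional attractor, i.e. `Λᵢ = W^u(Λᵢ)` and `Λᵢ` is nowhere dense,
and suppose `M² = ⋃ᵢ W^u(Λᵢ)`. This is impossible (Baire category theorem). -/
theorem stmt9 {M : Type*} [MetricSpace M] [CompactSpace M] [Nonempty M]
    [ChartedSpace (EuclideanSpace ℝ (Fin 2)) M]
    (f : M ≃ₜ M) (k : ℕ) (Λ : Fin k → Set M) (Wu : Fin k → Set M)
    (hinv : ∀ i, f '' Λ i = Λ i)
    (hclosed : ∀ i, IsClosed (Λ i))
    (hnd : ∀ i, IsNowhereDense (Λ i))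
    (hdisj : Pairwise (Function.onFun Disjoint Λ))
    (hattr : ∀ i, Wu i = Λ i)
    (hcover : (⋃ i, Wu i) = Set.univ) : False := by
  have hcover' : (⋃ i, Λ i) = Set.univ := by
    rw [← hcover]; exact Set.iUnion_congr fun i => (hattr i).symm
  obtain ⟨i, hi⟩ := nonempty_interior_of_iUnion_of_closed hclosed hcover'
  have := hnd i
  rw [IsNowhereDense, (hclosed i).closure_eq] at this
  rw [this] at hi
  exact hi.ne_empty rfl
end

section
/- Let f ∈ G(M²), i.e., an A-diffeomorphism of a closed orientable surface whose non-wandering set consists of finitely many one-dimensional basic sets (attractors and repellers). Then the non-wandering set of f contains at least one attractor and at least one repeller. -/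
/-- Let `f ∈ G(M²)`: an A-diffeomorphism of a closed orientable surface whose
non-wandering set consists of finitely many one-dimensional basic sets `Λ₁, …, Λ_k`,
each an attractor or a repeller. Each basic set is closed, nowhere dense, invariant;
an attractor satisfies `Λ = W^u(Λ)` and a repeller `Λ = W^s(Λ)`; and the surface is
the union of the unstable manifolds, and also of the stable manifolds, of the basic
sets. Then the non-wandering set contains at least one attractor and at least one
repeller. -/
theorem stmt10 {M : Type*} [MetricSpace M] [CompactSpace M] [Nonempty M]
    [ChartedSpace (EuclideanSpace ℝ (Fin 2)) M]
    (f : M ≃ₜ M) (k : ℕ) (Λ Wu Ws : Fin k → Set M)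
    (isAttr : Fin k → Prop)
    (hinv : ∀ i, f '' Λ i = Λ i)
    (hclosed : ∀ i, IsClosed (Λ i))
    (hnd : ∀ i, IsNowhereDense (Λ i))
    (hdisj : Pairwise (Function.onFun Disjoint Λ))
    (hattr : ∀ i, isAttr i → Wu i = Λ i)
    (hrep : ∀ i, ¬ isAttr i → Ws i = Λ i)
    (hcoverU : (⋃ i, Wu i) = Set.univ)
    (hcoverS : (⋃ i, Ws i) = Set.univ) :
    (∃ i, isAttr i) ∧ (∃ j, ¬ isAttr j) := by
  have key : (⋃ i, Λ i) ≠ Set.univ := by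
    intro h
    obtain ⟨i, hi⟩ := nonempty_interior_of_iUnion_of_closed hclosed h
    have hnd' := hnd i
    rw [IsNowhereDense, (hclosed i).closure_eq] at hnd'
    rw [hnd'] at hi
    exact hi.ne_empty rfl
  constructor
  · by_contra h
    push_neg at h
    exact key (by rw [← hcoverS]; exact Set.iUnion_congr fun i => (hrep i (h i)).symm)
  · by_contra h
    push_neg at h
    exact key (by rw [← hcoverU]; exact Set.iUnion_congr fun i => (hattr i (h i)).symm)
end
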